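/- arXiv:2503.07227 — 5 statements merged into one kernel-verified Lean document; each statement's English description precedes it below -/
import Mathlib

section
/- Let C ⊆ X be a finite nonempty subset with x* ∈ C, and assume the kernel is nonnegative, i.e. k(x,y) ≥ 0 for all x,y ∈ X. Then for every x ∈ X: if x is not incident to any c ∈ C, then Δ(x,C) = ‖φ(x)‖² + c*; otherwise Δ(x,C) = ‖φ(x)‖² + min( min_{c ∈ C, x ∼ c} (‖φ(c)‖² − 2·k(x,c)), c* ). -/
open scoped RealInnerProductSpace Classical

/-- For a finite nonempty `C ⊆ X` containing the minimal-self-affinity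
point `x*`, and a nonnegative kernel, the squared distance `Δ(x,C)` from any `x ∈ X` to `C`
decomposes as: if `x` is incident to no point of `C` then `Δ(x,C) = ‖φ(x)‖² + c*`,
otherwise `Δ(x,C) = ‖φ(x)‖² + min(min_{c ∈ C, x ∼ c}(‖φ(c)‖² - 2 k(x,c)), c*)`. -/
theorem stmt0 {α H : Type*} [NormedAddCommGroup H] [InnerProductSpace ℝ H]
    (X C : Finset α) (φ : α → H) (xstar : α)
    (hCX : C ⊆ X) (hC : C.Nonempty) (hxC : xstar ∈ C)
    (hxmin : ∀ x ∈ X, ‖φ xstar‖ ^ 2 ≤ ‖φ x‖ ^ 2)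
    (hker : ∀ x ∈ X, ∀ y ∈ X, 0 ≤ ⟪φ x, φ y⟫)
    (x : α) (hx : x ∈ X) :
    ((∀ c ∈ C, ⟪φ x, φ c⟫ = 0) →
      C.inf' hC (fun c => ‖φ x - φ c‖ ^ 2) = ‖φ x‖ ^ 2 + ‖φ xstar‖ ^ 2) ∧
    (∀ hne : (C.filter fun c => ⟪φ x, φ c⟫ ≠ 0).Nonempty,
      C.inf' hC (fun c => ‖φ x - φ c‖ ^ 2) =
        ‖φ x‖ ^ 2 +
          min ((C.filter fun c => ⟪φ x, φ c⟫ ≠ 0).inf' hne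
                (fun c => ‖φ c‖ ^ 2 - 2 * ⟪φ x, φ c⟫))
              (‖φ xstar‖ ^ 2)) := by
  have hsq : ∀ c : α, ‖φ x - φ c‖ ^ 2 = ‖φ x‖ ^ 2 + (‖φ c‖ ^ 2 - 2 * ⟪φ x, φ c⟫) := by
    intro c
    have := @norm_sub_sq_real H _ _ (φ x) (φ c)
    linarith
  constructor
  · intro h0
    apply le_antisymm
    · have h1 : C.inf' hC (fun c => ‖φ x - φ c‖ ^ 2) ≤ ‖φ x - φ xstar‖ ^ 2 :=
        Finset.inf'_le _ hxC
      rw [hsq xstar, h0 xstar hxC] at h1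
      linarith
    · apply Finset.le_inf'
      intro c hc
      rw [hsq c, h0 c hc]
      have := hxmin c (hCX hc)
      linarith
  · intro hne
    apply le_antisymm
    · rw [← min_add_add_left, le_min_iff]
      constructor
      · obtain ⟨c, hcmem, hceq⟩ := Finset.exists_mem_eq_inf'
          hne (fun c => ‖φ c‖ ^ 2 - 2 * ⟪φ x, φ c⟫)
        rw [hceq, ← hsq c]
        exact Finset.inf'_le _ (Finset.mem_of_mem_filter c hcmem)
      · have h1 : C.inf' hC (fun c => ‖φ x - φ c‖ ^ 2) ≤ ‖φ x - φ xstar‖ ^ 2 :=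
          Finset.inf'_le _ hxC
        have h2 := hker x hx xstar (hCX hxC)
        rw [hsq xstar] at h1
        linarith
    · apply Finset.le_inf'
      intro c hc
      rw [hsq c]
      by_cases h : ⟪φ x, φ c⟫ = 0
      · have h1 : min ((C.filter fun c => ⟪φ x, φ c⟫ ≠ 0).inf' hne
            (fun c => ‖φ c‖ ^ 2 - 2 * ⟪φ x, φ c⟫)) (‖φ xstar‖ ^ 2) ≤ ‖φ xstar‖ ^ 2 :=
          min_le_right _ _
        have h2 := hxmin c (hCX hc)
        rw [h]
        linarith
      · have h1 : min ((C.filter fun c => ⟪φ x, φ c⟫ ≠ 0).inf' hne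
            (fun c => ‖φ c‖ ^ 2 - 2 * ⟪φ x, φ c⟫)) (‖φ xstar‖ ^ 2) ≤
            ‖φ c‖ ^ 2 - 2 * ⟪φ x, φ c⟫ :=
          le_trans (min_le_left _ _) (Finset.inf'_le _ (Finset.mem_filter.2 ⟨hc, h⟩))
        linarith
end

section
/- Let V = {1,…,n}, φ : V → H a map into a real inner product space with kernel matrix K given by K_{uv} = ⟨φ(u), φ(v)⟩, and W = diag(w(1),…,w(n)) with w(v) > 0 for all v. Let X ∈ {0,1}^{n×k} satisfy X·1_k = 1_n with each cluster π_j nonempty, let m_j = (Σ_{b∈π_j} w(b)·φ(b)) / (Σ_{b∈π_j} w(b)) be the weighted centroids, and Y = X·(XᵀWX)^{−1/2}. Then the weighted kernel k-means cost satisfies Σ_{j=1}^{k} Σ_{v∈π_j} w(v)·‖φ(v) − m_j‖² = tr(WK) − tr(Yᵀ W K W Y). -/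
open Matrix
open scoped RealInnerProductSpace Classical

lemma cluster_cost' {n : ℕ} {H : Type*} [NormedAddCommGroup H] [InnerProductSpace ℝ H]
    (φ : Fin n → H) (w : Fin n → ℝ) (s : Finset (Fin n)) (hS : (∑ b ∈ s, w b) ≠ 0) :
    ∑ v ∈ s, w v * ‖φ v - (∑ b ∈ s, w b)⁻¹ • ∑ b ∈ s, w b • φ b‖ ^ 2
      = ∑ v ∈ s, w v * ‖φ v‖ ^ 2 - (∑ b ∈ s, w b)⁻¹ * ‖∑ b ∈ s, w b • φ b‖ ^ 2 := by
  set S := ∑ b ∈ s, w b with hSdef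
  set z := ∑ b ∈ s, w b • φ b with hzdef
  have hsum_inner : (∑ v ∈ s, w v * ⟪φ v, z⟫) = ‖z‖ ^ 2 := by
    rw [← real_inner_self_eq_norm_sq, hzdef]
    rw [sum_inner]
    exact Finset.sum_congr rfl fun v _ => (real_inner_smul_left _ _ _).symm
  have expand : ∀ v ∈ s, w v * ‖φ v - S⁻¹ • z‖ ^ 2
      = w v * ‖φ v‖ ^ 2 - 2 * S⁻¹ * (w v * ⟪φ v, z⟫) + w v * (S⁻¹ ^ 2 * ‖z‖ ^ 2) := by
    intro v _
    rw [norm_sub_sq_real, real_inner_smul_right, norm_smul]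
    rw [mul_pow, Real.norm_eq_abs, sq_abs]
    ring
  rw [Finset.sum_congr rfl expand, Finset.sum_add_distrib, Finset.sum_sub_distrib,
    ← Finset.mul_sum, ← Finset.sum_mul]
  rw [hsum_inner, ← hSdef]
  field_simp
  ring

/-- For a feature map `φ` with kernel matrix `K_{uv} = ⟨φ(u),φ(v)⟩`,
positive weights `w`, membership matrix `X` with nonempty clusters `π_j`, weighted
centroids `m_j`, and `Y = X (XᵀWX)^{-1/2}` (here: `Y = X M` with `M` symmetric and
`M² = (XᵀWX)⁻¹`), the weighted kernel k-means cost satisfies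
`Σ_j Σ_{v∈π_j} w(v)‖φ(v) − m_j‖² = tr(WK) − tr(YᵀWKWY)`. -/
theorem stmt10 {n k : ℕ} {H : Type*} [NormedAddCommGroup H] [InnerProductSpace ℝ H]
    (φ : Fin n → H) (K : Matrix (Fin n) (Fin n) ℝ)
    (hK : ∀ u v, K u v = ⟪φ u, φ v⟫)
    (w : Fin n → ℝ) (hw : ∀ v, 0 < w v)
    (X : Matrix (Fin n) (Fin k) ℝ)
    (hX01 : ∀ i j, X i j = 0 ∨ X i j = 1)
    (hXrow : ∀ i, ∑ j, X i j = 1)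
    (hne : ∀ j, (Finset.univ.filter fun i => X i j = 1).Nonempty)
    (M : Matrix (Fin k) (Fin k) ℝ) (hMsymm : M.IsSymm)
    (hMsq : M * M = (Xᵀ * Matrix.diagonal w * X)⁻¹) :
    (∑ j : Fin k, ∑ v ∈ Finset.univ.filter (fun i => X i j = 1),
        w v * ‖φ v -
          (∑ b ∈ Finset.univ.filter (fun i => X i j = 1), w b)⁻¹ •
            ∑ b ∈ Finset.univ.filter (fun i => X i j = 1), w b • φ b‖ ^ 2) =
      Matrix.trace (Matrix.diagonal w * K) -
        Matrix.trace ((X * M)ᵀ * Matrix.diagonal w * K * Matrix.diagonal w * (X * M)) := by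
    -- notation
  set π : Fin k → Finset (Fin n) := fun j => Finset.univ.filter (fun i => X i j = 1) with hπ
  set S : Fin k → ℝ := fun j => ∑ b ∈ π j, w b with hSdef
  set z : Fin k → H := fun j => ∑ b ∈ π j, w b • φ b with hzdef
  -- uniqueness of cluster membership
  have huniq : ∀ i, ∃! j, X i j = 1 := by
    intro i
    have hnn : ∀ j, 0 ≤ X i j := fun j => by rcases hX01 i j with h | h <;> simp [h]
    have hex : ∃ j, X i j = 1 := by
      by_contra h
      push_neg at h
      have hz : ∀ j, X i j = 0 := fun j => (hX01 i j).resolve_right (h j)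
      have h0 := hXrow i
      rw [Finset.sum_eq_zero (fun j _ => hz j)] at h0
      norm_num at h0
    obtain ⟨j₀, hj₀⟩ := hex
    refine ⟨j₀, hj₀, fun j' hj' => ?_⟩
    by_contra hne'
    have h2 : (2 : ℝ) ≤ ∑ j, X i j := by
      have hle : X i j' + X i j₀ ≤ ∑ j, X i j := by
        rw [← Finset.sum_pair hne']
        exact Finset.sum_le_sum_of_subset_of_nonneg (Finset.subset_univ _)
          (fun j _ _ => hnn j)
      rw [hj', hj₀] at hle; linarith
    rw [hXrow i] at h2; linarith
  have hSpos : ∀ j, 0 < S j := by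
    intro j
    exact Finset.sum_pos (fun b _ => hw b) (hne j)
  have hSne : ∀ j, S j ≠ 0 := fun j => (hSpos j).ne'
  -- X^T W X = diagonal S
  have hXtWX : Xᵀ * Matrix.diagonal w * X = Matrix.diagonal S := by
    ext j j'
    rw [Matrix.mul_apply]
    simp only [Matrix.mul_diagonal, Matrix.transpose_apply]
    by_cases h : j = j'
    · subst h
      rw [Matrix.diagonal_apply_eq, hSdef]
      simp only [hπ]
      rw [Finset.sum_filter]
      apply Finset.sum_congr rfl
      intro i _
      rcases hX01 i j with h | h <;> simp [h]
    · rw [Matrix.diagonal_apply_ne _ h]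
      apply Finset.sum_eq_zero
      intro i _
      rcases hX01 i j with h0 | h1
      · simp [h0]
      · have hne1 : X i j' ≠ 1 := fun h1' => h ((huniq i).unique h1 h1' ▸ rfl)
        rcases hX01 i j' with h0' | h1'
        · simp [h0']
        · exact absurd h1' hne1
  -- inverse
  have hinv : (Xᵀ * Matrix.diagonal w * X)⁻¹ = Matrix.diagonal (fun j => (S j)⁻¹) := by
    rw [hXtWX, Matrix.inv_diagonal]
    have hu : S * (fun j => (S j)⁻¹) = 1 := by
      funext j; exact mul_inv_cancel₀ (hSne j)
    have hu' : (fun j => (S j)⁻¹) * S = 1 := by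
      funext j; exact inv_mul_cancel₀ (hSne j)
    have heq : Ring.inverse S = fun j => (S j)⁻¹ :=
      Ring.inverse_unit ⟨S, fun j => (S j)⁻¹, hu, hu'⟩
    rw [heq]
  -- trace of W K
  have htr1 : Matrix.trace (Matrix.diagonal w * K) = ∑ v, w v * ‖φ v‖ ^ 2 := by
    rw [Matrix.trace]
    apply Finset.sum_congr rfl
    intro v _
    rw [Matrix.diag_apply, Matrix.diagonal_mul, hK, real_inner_self_eq_norm_sq]
  -- indicator sums
  have hind : ∀ j (g : Fin n → ℝ), (∑ u, X u j * g u) = ∑ u ∈ π j, g u := by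
    intro j g
    simp only [hπ]
    rw [Finset.sum_filter]
    apply Finset.sum_congr rfl
    intro u _
    rcases hX01 u j with h | h <;> simp [h]
  -- the quadratic form entries
  have hCjj : ∀ j, (Xᵀ * Matrix.diagonal w * K * Matrix.diagonal w * X) j j
      = ∑ u ∈ π j, ∑ v ∈ π j, w u * K u v * w v := by
    intro j
    have : (Xᵀ * Matrix.diagonal w * K * Matrix.diagonal w * X) j j
        = ∑ u, X u j * ∑ v, X v j * (w u * K u v * w v) := by
      rw [show Xᵀ * Matrix.diagonal w * K * Matrix.diagonal w * X
          = Xᵀ * ((Matrix.diagonal w * K * Matrix.diagonal w) * X) by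
        simp only [Matrix.mul_assoc]]
      rw [Matrix.mul_apply]
      apply Finset.sum_congr rfl
      intro u _
      rw [Matrix.transpose_apply, Matrix.mul_apply, Finset.mul_sum, Finset.mul_sum]
      apply Finset.sum_congr rfl
      intro v _
      simp only [Matrix.mul_diagonal, Matrix.diagonal_mul]
      ring
    rw [this, hind j (fun u => ∑ v, X v j * (w u * K u v * w v))]
    apply Finset.sum_congr rfl
    intro u _
    exact hind j (fun v => w u * K u v * w v)
  -- norm of z
  have hznorm : ∀ j, (∑ u ∈ π j, ∑ v ∈ π j, w u * K u v * w v) = ‖z j‖ ^ 2 := by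
    intro j
    rw [← real_inner_self_eq_norm_sq, hzdef]
    simp only
    rw [sum_inner]
    apply Finset.sum_congr rfl
    intro u _
    rw [real_inner_smul_left, inner_sum, Finset.mul_sum]
    apply Finset.sum_congr rfl
    intro v _
    rw [real_inner_smul_right, hK]
    ring
  -- trace of second term
  have htr2 : Matrix.trace ((X * M)ᵀ * Matrix.diagonal w * K * Matrix.diagonal w * (X * M))
      = ∑ j, (S j)⁻¹ * ‖z j‖ ^ 2 := by
    have hassoc : (X * M)ᵀ * Matrix.diagonal w * K * Matrix.diagonal w * (X * M)
        = Mᵀ * ((Xᵀ * Matrix.diagonal w * K * Matrix.diagonal w * X) * M) := by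
      rw [Matrix.transpose_mul]
      simp only [Matrix.mul_assoc]
    rw [hassoc, Matrix.trace_mul_comm, Matrix.mul_assoc,
      show M * Mᵀ = M * M by rw [hMsymm.eq], hMsq, hinv]
    rw [Matrix.trace]
    have : ∀ j : Fin k,
        ((Xᵀ * Matrix.diagonal w * K * Matrix.diagonal w * X) *
          Matrix.diagonal (fun j => (S j)⁻¹)).diag j = (S j)⁻¹ * ‖z j‖ ^ 2 := by
      intro j
      rw [Matrix.diag_apply, Matrix.mul_diagonal, hCjj, hznorm]
      ring
    exact Finset.sum_congr rfl (fun j _ => this j)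
  -- partition sum
  have hpart : ∀ (f : Fin n → ℝ), (∑ j, ∑ v ∈ π j, f v) = ∑ v, f v := by
    intro f
    have : ∀ j, (∑ v ∈ π j, f v) = ∑ v, if X v j = 1 then f v else 0 := by
      intro j; rw [hπ]; simp only; rw [Finset.sum_filter]
    rw [Finset.sum_congr rfl (fun j _ => this j), Finset.sum_comm]
    apply Finset.sum_congr rfl
    intro v _
    obtain ⟨j₀, hj₀, huj⟩ := huniq v
    rw [Finset.sum_eq_single j₀]
    · simp [hj₀]
    · intro j _ hjne
      have : X v j ≠ 1 := fun h => hjne (huj j h)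
      simp [this]
    · intro h; exact absurd (Finset.mem_univ j₀) h
  -- put it together
  calc (∑ j : Fin k, ∑ v ∈ π j, w v * ‖φ v - (S j)⁻¹ • z j‖ ^ 2)
      = ∑ j : Fin k, (∑ v ∈ π j, w v * ‖φ v‖ ^ 2 - (S j)⁻¹ * ‖z j‖ ^ 2) := by
        apply Finset.sum_congr rfl
        intro j _
        exact cluster_cost' φ w (π j) (hSne j)
    _ = (∑ j : Fin k, ∑ v ∈ π j, w v * ‖φ v‖ ^ 2) - ∑ j, (S j)⁻¹ * ‖z j‖ ^ 2 := by
        rw [Finset.sum_sub_distrib]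
    _ = (∑ v, w v * ‖φ v‖ ^ 2) - ∑ j, (S j)⁻¹ * ‖z j‖ ^ 2 := by
        rw [hpart]
    _ = _ := by rw [htr1, htr2]
end

section
/- Let V be a finite set with |V| = n ≥ 2, and w : V×V → ℝ_{≥0} symmetric with deg(i) = Σ_{j∈V} w(i,j) > 0 for all i; write deg*(i) = Σ_{j≠i} w(i,j). Let C > 0 and λ > 0 be constants, L = 6·C·log(n)/λ, and p_i(j) = (C·log(n)/λ)·w(i,j)/deg(i); assume p_i(j) ≤ 1 for all i ≠ j. Set p(i,j) = p_i(j) + p_j(i) − p_i(j)·p_j(i). Suppose p̂(i,j) are reals with (6/7)·p(i,j) ≤ p̂(i,j) ≤ (36/5)·p(i,j) and p̂(i,j) > 0 whenever w(i,j) > 0, and q : V×V → ℝ_{≥0} satisfies w(i,j)/(2·deg(i)) ≤ q(i,j) ≤ 2·w(i,j)/deg(i) for all i ≠ j. Then for every i (with terms where w(i,j) = 0 read as 0): (5/12)·deg*(i) ≤ L·Σ_{j≠i} (q(i,j) + q(j,i))·w(i,j)/p̂(i,j) ≤ 28·deg*(i). -/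
open scoped Classical

/-- Deterministic core of the expected-degree preservation argument
for the cluster-preserving sparsifier: with `L = 6C·log n/λ` sampling rounds,
per-round sampling probabilities `q(i,j) ∈ [w(i,j)/(2deg(i)), 2w(i,j)/deg(i)]`, and
estimated edge probabilities `p̂(i,j) ∈ [(6/7)p(i,j), (36/5)p(i,j)]`, the expected
degree (excluding the self-affinity) of each vertex `i` in the sparsifier lies in
`[(5/12)deg*(i), 28·deg*(i)]` (terms with `w(i,j) = 0` read as `0`). -/
theorem stmt14 (n : ℕ) (hn : 2 ≤ n)
    (w : Fin n → Fin n → ℝ) (hw0 : ∀ i j, 0 ≤ w i j)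
    (hwsymm : ∀ i j, w i j = w j i)
    (hdeg : ∀ i, 0 < ∑ j, w i j)
    (C lam : ℝ) (hC : 0 < C) (hlam : 0 < lam)
    (p : Fin n → Fin n → ℝ)
    (hpdef : ∀ i j, p i j = C * Real.log n / lam * (w i j / ∑ j', w i j'))
    (hple : ∀ i j, i ≠ j → p i j ≤ 1)
    (phat : Fin n → Fin n → ℝ)
    (hphat_lb : ∀ i j, i ≠ j → 6 / 7 * (p i j + p j i - p i j * p j i) ≤ phat i j)
    (hphat_ub : ∀ i j, i ≠ j → phat i j ≤ 36 / 5 * (p i j + p j i - p i j * p j i))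
    (hphat_pos : ∀ i j, i ≠ j → 0 < w i j → 0 < phat i j)
    (q : Fin n → Fin n → ℝ) (hq0 : ∀ i j, 0 ≤ q i j)
    (hq_lb : ∀ i j, i ≠ j → w i j / (2 * ∑ j', w i j') ≤ q i j)
    (hq_ub : ∀ i j, i ≠ j → q i j ≤ 2 * w i j / ∑ j', w i j')
    (i : Fin n) :
    (5 / 12 * ∑ j ∈ Finset.univ.erase i, w i j) ≤
        6 * C * Real.log n / lam *
          ∑ j ∈ Finset.univ.erase i,
            (if w i j = 0 then 0 else (q i j + q j i) * w i j / phat i j) ∧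
    6 * C * Real.log n / lam *
        ∑ j ∈ Finset.univ.erase i,
          (if w i j = 0 then 0 else (q i j + q j i) * w i j / phat i j) ≤
      28 * ∑ j ∈ Finset.univ.erase i, w i j := by
  have h2 : (2:ℝ) ≤ (n:ℝ) := by exact_mod_cast hn
  have hlog : 0 < Real.log n := Real.log_pos (by linarith)
  set K : ℝ := C * Real.log n / lam with hKdef
  have hK : 0 < K := by positivity
  have h6 : 6 * C * Real.log n / lam = 6 * K := by rw [hKdef]; ring
  have hterm : ∀ j ∈ Finset.univ.erase i,
      5 / 12 * w i j ≤ 6 * K *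
        (if w i j = 0 then 0 else (q i j + q j i) * w i j / phat i j) ∧
      6 * K *
        (if w i j = 0 then 0 else (q i j + q j i) * w i j / phat i j)
        ≤ 28 * w i j := by
    intro j hj
    have hji : j ≠ i := (Finset.mem_erase.mp hj).1
    have hij : i ≠ j := hji.symm
    by_cases hwz : w i j = 0
    · simp [hwz]
    · have hw : 0 < w i j := lt_of_le_of_ne (hw0 i j) (Ne.symm hwz)
      simp only [if_neg hwz]
      have hdi : 0 < ∑ j', w i j' := hdeg i
      have hdj : 0 < ∑ j', w j j' := hdeg j
      set r : ℝ := w i j / (∑ j', w i j') + w i j / (∑ j', w j j') with hrdef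
      have hr : 0 < r := by positivity
      have ha : p i j = K * (w i j / ∑ j', w i j') := hpdef i j
      have hb : p j i = K * (w i j / ∑ j', w j j') := by
        rw [hpdef j i, hwsymm j i, hKdef]
      have hS : p i j + p j i = K * r := by rw [ha, hb, hrdef]; ring
      have ha0 : 0 < p i j := by rw [ha]; positivity
      have hb0 : 0 < p j i := by rw [hb]; positivity
      have ha1 : p i j ≤ 1 := hple i j hij
      have hb1 : p j i ≤ 1 := hple j i hji
      have hpbar_ub : p i j + p j i - p i j * p j i ≤ K * r := by
        nlinarith [mul_pos ha0 hb0]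
      have hpbar_lb : K * r / 2 ≤ p i j + p j i - p i j * p j i := by
        nlinarith [mul_nonneg (by linarith : (0:ℝ) ≤ 1 - p i j) hb0.le,
          mul_nonneg ha0.le (by linarith : (0:ℝ) ≤ 1 - p j i)]
      have hphl : 3 * (K * r) / 7 ≤ phat i j := by
        have := hphat_lb i j hij; linarith
      have hphu : phat i j ≤ 36 / 5 * (K * r) := by
        have := hphat_ub i j hij; linarith
      have hph0 : 0 < phat i j := lt_of_lt_of_le (by positivity) hphl
      have hQl : r / 2 ≤ q i j + q j i := by
        have h1 := hq_lb i j hij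
        have h2 := hq_lb j i hji
        rw [hwsymm j i] at h2
        have e1 : w i j / (2 * ∑ j', w i j') = (w i j / ∑ j', w i j') / 2 := by ring
        have e2 : w i j / (2 * ∑ j', w j j') = (w i j / ∑ j', w j j') / 2 := by ring
        rw [e1] at h1; rw [e2] at h2
        rw [hrdef]; linarith
      have hQu : q i j + q j i ≤ 2 * r := by
        have h1 := hq_ub i j hij
        have h2 := hq_ub j i hji
        rw [hwsymm j i] at h2
        have e1 : 2 * w i j / (∑ j', w i j') = 2 * (w i j / ∑ j', w i j') := by ring
        have e2 : 2 * w i j / (∑ j', w j j') = 2 * (w i j / ∑ j', w j j') := by ring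
        rw [e1] at h1; rw [e2] at h2
        rw [hrdef]; linarith
      constructor
      · rw [mul_div_assoc', le_div_iff₀ hph0]
        nlinarith [mul_le_mul_of_nonneg_left hphu (by positivity : (0:ℝ) ≤ 5 / 12 * w i j),
          mul_le_mul_of_nonneg_left hQl (by positivity : (0:ℝ) ≤ 6 * K * w i j)]
      · rw [mul_div_assoc', div_le_iff₀ hph0]
        nlinarith [mul_le_mul_of_nonneg_left hQu (by positivity : (0:ℝ) ≤ 6 * K * w i j),
          mul_le_mul_of_nonneg_left hphl (by positivity : (0:ℝ) ≤ 28 * w i j)]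
  rw [h6]
  constructor
  · rw [Finset.mul_sum, Finset.mul_sum]
    exact Finset.sum_le_sum fun j hj => (hterm j hj).1
  · rw [Finset.mul_sum, Finset.mul_sum]
    exact Finset.sum_le_sum fun j hj => (hterm j hj).2
end

section
/- Under the following hypotheses, for every i (terms with w(i,j) = 0 read as 0): L·Σ_{j≠i} (q(i,j) + q(j,i))·w(i,j)²/p̂(i,j)² ≤ 98·deg(i)²·λ/(3·C·log(n)). Hypotheses: V finite with |V| = n ≥ 2; w : V×V → ℝ_{≥0} symmetric with deg(i) = Σ_{j∈V} w(i,j) > 0; C > 0, λ > 0; L = 6·C·log(n)/λ; p_i(j) = (C·log(n)/λ)·w(i,j)/deg(i) with p_i(j) ≤ 1 for all i ≠ j; p(i,j) = p_i(j) + p_j(i) − p_i(j)·p_j(i); (6/7)·p(i,j) ≤ p̂(i,j) ≤ (36/5)·p(i,j) with p̂(i,j) > 0 whenever w(i,j) > 0; and w(i,j)/(2·deg(i)) ≤ q(i,j) ≤ 2·w(i,j)/deg(i) for all i ≠ j. -/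
open scoped Classical

lemma aux16 (di dj K W A qij qji : ℝ) (hdi : 0 < di) (hdj : 0 < dj)
    (hK : 0 < K) (hW : 0 < W) (hA : 0 < A)
    (h1 : 6 * (K * W) ≤ 7 * (A * di)) (h2 : 6 * (K * W) ≤ 7 * (A * dj))
    (hq1 : qij * di ≤ 2 * W) (hq2 : qji * dj ≤ 2 * W)
    (hq1' : 0 ≤ qij) (hq2' : 0 ≤ qji) :
    (qij + qji) * W ^ 2 / A ^ 2 ≤ 49 / 9 * (di * W) / K ^ 2 := by
  rw [div_le_div_iff₀ (by positivity) (by positivity)]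
  have e1 : (6*(K*W))*(6*(K*W)) ≤ (7*(A*di))*(7*(A*di)) :=
    mul_le_mul h1 h1 (by positivity) (by positivity)
  have e2 : (6*(K*W))*(6*(K*W)) ≤ (7*(A*di))*(7*(A*dj)) :=
    mul_le_mul h1 h2 (by positivity) (by positivity)
  have e3 : (qij*di)*(W^2*K^2*dj) ≤ (2*W)*(W^2*K^2*dj) :=
    mul_le_mul_of_nonneg_right hq1 (by positivity)
  have e4 : (qji*dj)*(W^2*K^2*di) ≤ (2*W)*(W^2*K^2*di) :=
    mul_le_mul_of_nonneg_right hq2 (by positivity)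
  nlinarith [e1, e2, e3, e4, mul_pos hW hdj, mul_pos hW hdi, mul_pos hdi hdj]

/-- Deterministic bound on the second-moment quantity `R` in the
Bernstein step of the degree-concentration proof:
`L·Σ_{j≠i} (q(i,j)+q(j,i))·w(i,j)²/p̂(i,j)² ≤ 98·deg(i)²·λ/(3C·log n)`
(terms with `w(i,j) = 0` read as `0`). -/
theorem stmt16 (n : ℕ) (hn : 2 ≤ n)
    (w : Fin n → Fin n → ℝ) (hw0 : ∀ i j, 0 ≤ w i j)
    (hwsymm : ∀ i j, w i j = w j i)
    (hdeg : ∀ i, 0 < ∑ j, w i j)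
    (C lam : ℝ) (hC : 0 < C) (hlam : 0 < lam)
    (p : Fin n → Fin n → ℝ)
    (hpdef : ∀ i j, p i j = C * Real.log n / lam * (w i j / ∑ j', w i j'))
    (hple : ∀ i j, i ≠ j → p i j ≤ 1)
    (phat : Fin n → Fin n → ℝ)
    (hphat_lb : ∀ i j, i ≠ j → 6 / 7 * (p i j + p j i - p i j * p j i) ≤ phat i j)
    (hphat_ub : ∀ i j, i ≠ j → phat i j ≤ 36 / 5 * (p i j + p j i - p i j * p j i))
    (hphat_pos : ∀ i j, i ≠ j → 0 < w i j → 0 < phat i j)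
    (q : Fin n → Fin n → ℝ) (hq0 : ∀ i j, 0 ≤ q i j)
    (hq_lb : ∀ i j, i ≠ j → w i j / (2 * ∑ j', w i j') ≤ q i j)
    (hq_ub : ∀ i j, i ≠ j → q i j ≤ 2 * w i j / ∑ j', w i j')
    (i : Fin n) :
    6 * C * Real.log n / lam *
        ∑ j ∈ Finset.univ.erase i,
          (if w i j = 0 then 0 else (q i j + q j i) * (w i j) ^ 2 / (phat i j) ^ 2) ≤
      98 * (∑ j, w i j) ^ 2 * lam / (3 * C * Real.log n) := by
  have hlog : 0 < Real.log n := by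
    apply Real.log_pos
    exact_mod_cast by omega
  set K : ℝ := C * Real.log n / lam with hKdef
  have hK : 0 < K := by positivity
  set d : Fin n → ℝ := fun k => ∑ j', w k j' with hd
  have hdpos : ∀ k, 0 < d k := hdeg
  -- per-term bound
  have hterm : ∀ j ∈ Finset.univ.erase i,
      (if w i j = 0 then 0 else (q i j + q j i) * (w i j) ^ 2 / (phat i j) ^ 2)
        ≤ 49 / 9 * (d i * w i j) / K ^ 2 := by
    intro j hj
    have hji : j ≠ i := (Finset.mem_erase.mp hj).1
    have hij : i ≠ j := hji.symm
    by_cases hw : w i j = 0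
    · rw [if_pos hw, hw]
      simp
    · have hW : 0 < w i j := lt_of_le_of_ne (hw0 i j) (Ne.symm hw)
      rw [if_neg hw]
      have hdine : d i ≠ 0 := (hdpos i).ne'
      have hdjne : d j ≠ 0 := (hdpos j).ne'
      have hpij : p i j = K * (w i j / d i) := hpdef i j
      have hpji : p j i = K * (w i j / d j) := by rw [hpdef j i, ← hwsymm]
      have hpij0 : 0 ≤ p i j := by
        rw [hpij]
        exact mul_nonneg hK.le (div_nonneg (hw0 i j) (hdpos i).le)
      have hpji0 : 0 ≤ p j i := by
        rw [hpji]
        exact mul_nonneg hK.le (div_nonneg (hw0 i j) (hdpos j).le)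
      have hA1 : 6 / 7 * p i j ≤ phat i j := by
        refine le_trans ?_ (hphat_lb i j hij)
        nlinarith [hple i j hij, hple j i hji]
      have hA2 : 6 / 7 * p j i ≤ phat i j := by
        refine le_trans ?_ (hphat_lb i j hij)
        nlinarith [hple i j hij, hple j i hji]
      have h1 : 6 * (K * w i j) ≤ 7 * (phat i j * d i) := by
        rw [hpij] at hA1
        have h := mul_le_mul_of_nonneg_right hA1 (hdpos i).le
        have heq : 6 / 7 * (K * (w i j / d i)) * d i = 6 / 7 * (K * w i j) := by
          field_simp
        rw [heq] at h
        linarith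
      have h2 : 6 * (K * w i j) ≤ 7 * (phat i j * d j) := by
        rw [hpji] at hA2
        have h := mul_le_mul_of_nonneg_right hA2 (hdpos j).le
        have heq : 6 / 7 * (K * (w i j / d j)) * d j = 6 / 7 * (K * w i j) := by
          field_simp
        rw [heq] at h
        linarith
      have hq1 : q i j * d i ≤ 2 * w i j := by
        have h : q i j ≤ 2 * w i j / d i := hq_ub i j hij
        calc q i j * d i ≤ (2 * w i j / d i) * d i :=
              mul_le_mul_of_nonneg_right h (hdpos i).le
          _ = 2 * w i j := by field_simp
      have hq2 : q j i * d j ≤ 2 * w i j := by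
        have h : q j i ≤ 2 * w j i / d j := hq_ub j i hji
        rw [← hwsymm] at h
        calc q j i * d j ≤ (2 * w i j / d j) * d j :=
              mul_le_mul_of_nonneg_right h (hdpos j).le
          _ = 2 * w i j := by field_simp
      exact aux16 (d i) (d j) K (w i j) (phat i j) (q i j) (q j i)
        (hdpos i) (hdpos j) hK hW (hphat_pos i j hij hW) h1 h2 hq1 hq2
        (hq0 i j) (hq0 j i)
  have hEle : ∑ j ∈ Finset.univ.erase i, w i j ≤ d i := by
    apply Finset.sum_le_sum_of_subset_of_nonneg (Finset.erase_subset i Finset.univ)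
    intro k _ _
    exact hw0 i k
  have hS : ∑ j ∈ Finset.univ.erase i,
      (if w i j = 0 then 0 else (q i j + q j i) * (w i j) ^ 2 / (phat i j) ^ 2)
        ≤ 49 / 9 * (d i * d i) / K ^ 2 := by
    calc _ ≤ ∑ j ∈ Finset.univ.erase i, 49 / 9 * (d i * w i j) / K ^ 2 :=
          Finset.sum_le_sum hterm
      _ = 49 / 9 * d i / K ^ 2 * ∑ j ∈ Finset.univ.erase i, w i j := by
          rw [Finset.mul_sum]
          exact Finset.sum_congr rfl fun j _ => by ring
      _ ≤ 49 / 9 * d i / K ^ 2 * d i :=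
          mul_le_mul_of_nonneg_left hEle
            (div_nonneg (mul_nonneg (by norm_num) (hdpos i).le) (sq_nonneg K))
      _ = 49 / 9 * (d i * d i) / K ^ 2 := by ring
  have h6K : 6 * C * Real.log n / lam = 6 * K := by rw [hKdef]; ring
  rw [h6K]
  calc 6 * K * ∑ j ∈ Finset.univ.erase i,
        (if w i j = 0 then 0 else (q i j + q j i) * (w i j) ^ 2 / (phat i j) ^ 2)
      ≤ 6 * K * (49 / 9 * (d i * d i) / K ^ 2) :=
        mul_le_mul_of_nonneg_left hS (by nlinarith [hK])
    _ = 98 * (d i) ^ 2 * lam / (3 * C * Real.log n) := by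
        rw [hKdef]
        field_simp
        ring
end

section
/- Under the following hypotheses, for all disjoint subsets S, T ⊆ V (terms with w(u,v) = 0 read as 0): L·Σ_{u∈S} Σ_{v∈T} (q(u,v) + q(v,u))·w(u,v)/p̂(u,v) ≤ 28·Σ_{u∈S} Σ_{v∈T} w(u,v). Hypotheses: V finite with |V| = n ≥ 2; w : V×V → ℝ_{≥0} symmetric with deg(i) = Σ_{j∈V} w(i,j) > 0; C > 0, λ > 0; L = 6·C·log(n)/λ; p_i(j) = (C·log(n)/λ)·w(i,j)/deg(i) with p_i(j) ≤ 1 for all i ≠ j; p(i,j) = p_i(j) + p_j(i) − p_i(j)·p_j(i); (6/7)·p(i,j) ≤ p̂(i,j) ≤ (36/5)·p(i,j) with p̂(i,j) > 0 whenever w(i,j) > 0; and w(i,j)/(2·deg(i)) ≤ q(i,j) ≤ 2·w(i,j)/deg(i) for all i ≠ j. -/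
open scoped Classical

/-- Deterministic core of the cut preservation claim for the
cluster-preserving sparsifier: for disjoint `S, T ⊆ V`, the expected sparsifier cut
weight `L·Σ_{u∈S}Σ_{v∈T} (q(u,v)+q(v,u))·w(u,v)/p̂(u,v)` is at most
`28·Σ_{u∈S}Σ_{v∈T} w(u,v)` (terms with `w(u,v) = 0` read as `0`). -/
theorem stmt18 (n : ℕ) (hn : 2 ≤ n)
    (w : Fin n → Fin n → ℝ) (hw0 : ∀ i j, 0 ≤ w i j)
    (hwsymm : ∀ i j, w i j = w j i)
    (hdeg : ∀ i, 0 < ∑ j, w i j)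
    (C lam : ℝ) (hC : 0 < C) (hlam : 0 < lam)
    (p : Fin n → Fin n → ℝ)
    (hpdef : ∀ i j, p i j = C * Real.log n / lam * (w i j / ∑ j', w i j'))
    (hple : ∀ i j, i ≠ j → p i j ≤ 1)
    (phat : Fin n → Fin n → ℝ)
    (hphat_lb : ∀ i j, i ≠ j → 6 / 7 * (p i j + p j i - p i j * p j i) ≤ phat i j)
    (hphat_ub : ∀ i j, i ≠ j → phat i j ≤ 36 / 5 * (p i j + p j i - p i j * p j i))
    (hphat_pos : ∀ i j, i ≠ j → 0 < w i j → 0 < phat i j)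
    (q : Fin n → Fin n → ℝ) (hq0 : ∀ i j, 0 ≤ q i j)
    (hq_lb : ∀ i j, i ≠ j → w i j / (2 * ∑ j', w i j') ≤ q i j)
    (hq_ub : ∀ i j, i ≠ j → q i j ≤ 2 * w i j / ∑ j', w i j')
    (S T : Finset (Fin n)) (hST : Disjoint S T) :
    6 * C * Real.log n / lam *
        ∑ u ∈ S, ∑ v ∈ T,
          (if w u v = 0 then 0 else (q u v + q v u) * w u v / phat u v) ≤
      28 * ∑ u ∈ S, ∑ v ∈ T, w u v := by

  have h1n : (1:ℝ) < n := by exact_mod_cast Nat.lt_of_lt_of_le one_lt_two hn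
  have hlog : 0 < Real.log n := Real.log_pos h1n
  set A : ℝ := C * Real.log n / lam with hAdef
  have hApos : 0 < A := div_pos (mul_pos hC hlog) hlam
  have key : ∀ u ∈ S, ∀ v ∈ T,
      6 * C * Real.log n / lam *
        (if w u v = 0 then 0 else (q u v + q v u) * w u v / phat u v) ≤ 28 * w u v := by
    intro u hu v hv
    have huv : u ≠ v := fun h => (Finset.disjoint_left.mp hST hu (h ▸ hv))
    by_cases hwz : w u v = 0
    · simp [hwz]
    · have hwpos : 0 < w u v := lt_of_le_of_ne (hw0 u v) (Ne.symm hwz)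
      rw [if_neg hwz]
      have hdu := hdeg u; have hdv := hdeg v
      have hphatpos := hphat_pos u v huv hwpos
      have hq1 : q u v ≤ 2 * w u v / ∑ j', w u j' := hq_ub u v huv
      have hq2 : q v u ≤ 2 * w u v / ∑ j', w v j' := by
        have := hq_ub v u huv.symm
        rwa [hwsymm v u] at this
      have hp1 : p u v = A * (w u v / ∑ j', w u j') := by rw [hpdef, hAdef]
      have hp2 : p v u = A * (w u v / ∑ j', w v j') := by rw [hpdef, hAdef, hwsymm v u]
      have hp1nn : 0 ≤ p u v := by rw [hp1]; positivity
      have hp2nn : 0 ≤ p v u := by rw [hp2]; positivity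
      have hple1 := hple u v huv
      have hple2 := hple v u huv.symm
      have hphlb := hphat_lb u v huv
      have hgoal : 6 * C * Real.log n / lam * ((q u v + q v u) * w u v / phat u v)
          = 6 * A * ((q u v + q v u) * w u v) / phat u v := by rw [hAdef]; ring
      rw [hgoal, div_le_iff₀ hphatpos]
      rcases le_total (∑ j', w u j') (∑ j', w v j') with hle | hle
      · have hq2' : q v u ≤ 2 * w u v / ∑ j', w u j' :=
          hq2.trans (div_le_div_of_nonneg_left (by positivity) hdu hle)
        have hmid : p u v ≤ p u v + p v u - p u v * p v u := by
          nlinarith [mul_nonneg hp2nn (sub_nonneg.mpr hple1)]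
        have hphlb' : 6 / 7 * (A * (w u v / ∑ j', w u j')) ≤ phat u v := by
          rw [← hp1]; linarith
        have h1 := mul_le_mul_of_nonneg_left (add_le_add hq1 hq2')
          (show (0:ℝ) ≤ 6 * A * w u v by positivity)
        have h2 := mul_le_mul_of_nonneg_left hphlb'
          (show (0:ℝ) ≤ 28 * w u v by positivity)
        have heq : 6 * A * w u v *
              (2 * w u v / ∑ j', w u j' + 2 * w u v / ∑ j', w u j')
            = 28 * w u v * (6 / 7 * (A * (w u v / ∑ j', w u j'))) := by ring
        linarith [h1, h2, heq]
      · have hq1' : q u v ≤ 2 * w u v / ∑ j', w v j' :=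
          hq1.trans (div_le_div_of_nonneg_left (by positivity) hdv hle)
        have hmid : p v u ≤ p u v + p v u - p u v * p v u := by
          nlinarith [mul_nonneg hp1nn (sub_nonneg.mpr hple2)]
        have hphlb' : 6 / 7 * (A * (w u v / ∑ j', w v j')) ≤ phat u v := by
          rw [← hp2]; linarith
        have h1 := mul_le_mul_of_nonneg_left (add_le_add hq1' hq2)
          (show (0:ℝ) ≤ 6 * A * w u v by positivity)
        have h2 := mul_le_mul_of_nonneg_left hphlb'
          (show (0:ℝ) ≤ 28 * w u v by positivity)
        have heq : 6 * A * w u v *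
              (2 * w u v / ∑ j', w v j' + 2 * w u v / ∑ j', w v j')
            = 28 * w u v * (6 / 7 * (A * (w u v / ∑ j', w v j'))) := by ring
        linarith [h1, h2, heq]
  calc 6 * C * Real.log n / lam *
        ∑ u ∈ S, ∑ v ∈ T,
          (if w u v = 0 then 0 else (q u v + q v u) * w u v / phat u v)
      = ∑ u ∈ S, ∑ v ∈ T, 6 * C * Real.log n / lam *
          (if w u v = 0 then 0 else (q u v + q v u) * w u v / phat u v) := by
        rw [Finset.mul_sum]; exact Finset.sum_congr rfl fun u _ => Finset.mul_sum ..
    _ ≤ ∑ u ∈ S, ∑ v ∈ T, 28 * w u v :=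
        Finset.sum_le_sum fun u hu => Finset.sum_le_sum fun v hv => key u hu v hv
    _ = 28 * ∑ u ∈ S, ∑ v ∈ T, w u v := by
        rw [Finset.mul_sum]; exact Finset.sum_congr rfl fun u _ => (Finset.mul_sum ..).symm
end
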